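/- Let d ≥ 3 and ε ∈ (0,1). There exists a constant C = C(d,ε) < ∞ such that for every x ∈ Z^d with |x| ≥ 1, the normalized surface (Haar) measure λ of the set of directions {v ∈ S^{d-1} : x ∈ ∪_{n=1}^∞ B(nv, n^ε)} is at most C |x|^{(ε-1)(d-1)}. -/

import Mathlib

open MeasureTheory
open scoped ENNReal


lemma abs_coord_le {n : ℕ} (w : EuclideanSpace ℝ (Fin n)) (i : Fin n) : |w i| ≤ ‖w‖ := by
  rw [EuclideanSpace.norm_eq]
  have : |w i| = Real.sqrt (‖w i‖^2) := by
    rw [Real.sqrt_sq_eq_abs]; simp [abs_abs]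
  rw [this]
  apply Real.sqrt_le_sqrt
  exact Finset.single_le_sum (f := fun j => ‖w j‖^2) (fun j _ => sq_nonneg _) (Finset.mem_univ i)

lemma norm_le_of_coords {n : ℕ} (w : EuclideanSpace ℝ (Fin n)) (a : ℝ) (ha : 0 ≤ a)
    (h : ∀ i, |w i| ≤ a) : ‖w‖ ≤ n * a := by
  rw [EuclideanSpace.norm_eq]
  have h1 : ∑ i, ‖w i‖^2 ≤ n * a^2 := by
    calc ∑ i, ‖w i‖^2 ≤ ∑ _i : Fin n, a^2 := by
          apply Finset.sum_le_sum
          intro i _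
          have := h i
          rw [Real.norm_eq_abs]
          nlinarith [abs_nonneg (w i)]
      _ = n * a^2 := by simp [Finset.sum_const]
  calc Real.sqrt (∑ i, ‖w i‖^2) ≤ Real.sqrt ((n:ℝ) * a^2) := Real.sqrt_le_sqrt h1
    _ = Real.sqrt n * a := by rw [Real.sqrt_mul (by positivity), Real.sqrt_sq ha]
    _ ≤ n * a := by
        apply mul_le_mul_of_nonneg_right _ ha
        have h2 : (n:ℝ) ≤ (n:ℝ)^2 := by exact_mod_cast Nat.le_self_pow (by norm_num) n
        calc Real.sqrt n ≤ Real.sqrt ((n:ℝ)^2) := Real.sqrt_le_sqrt h2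
          _ = n := Real.sqrt_sq (by positivity)

noncomputable def vpt {k : ℕ} (y : Fin k → ℝ) : EuclideanSpace ℝ (Fin (k+1)) :=
  WithLp.toLp 2 (fun i => Fin.lastCases (motive := fun _ => ℝ) (Real.sqrt (1 - ∑ j, (y j)^2)) y i)

lemma vpt_castSucc {k : ℕ} (y : Fin k → ℝ) (j : Fin k) : vpt y (Fin.castSucc j) = y j := by
  simp [vpt]

lemma vpt_norm {k : ℕ} (y : Fin k → ℝ) (h : ∑ j, (y j)^2 ≤ 1) : ‖vpt y‖ = 1 := by
  rw [EuclideanSpace.norm_eq]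
  have : ∑ i : Fin (k+1), ‖vpt y i‖^2 = 1 := by
    rw [Fin.sum_univ_castSucc]
    have h1 : ∀ j : Fin k, ‖vpt y (Fin.castSucc j)‖^2 = (y j)^2 := by
      intro j; rw [vpt_castSucc]; simp [Real.norm_eq_abs, sq_abs]
    have h2 : ‖vpt y (Fin.last k)‖^2 = 1 - ∑ j, (y j)^2 := by
      simp only [vpt, PiLp.toLp_apply, Fin.lastCases_last]
      rw [Real.norm_eq_abs, sq_abs, Real.sq_sqrt (by linarith)]
    rw [h2, Finset.sum_congr rfl (fun j _ => h1 j)]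
    ring
  rw [this, Real.sqrt_one]

lemma cap_measure_eq {n : ℕ} (lam : Measure (EuclideanSpace ℝ (Fin n)))
    (hinv : ∀ Q : EuclideanSpace ℝ (Fin n) ≃ₗᵢ[ℝ] EuclideanSpace ℝ (Fin n), lam.map Q = lam)
    (u1 u2 : EuclideanSpace ℝ (Fin n)) (h : ‖u1‖ = ‖u2‖) (r : ℝ) :
    lam (Metric.closedBall u1 r) = lam (Metric.closedBall u2 r) := by
  set Q := Submodule.reflection (ℝ ∙ (u1 - u2))ᗮ with hQdef
  have hQ : Q u1 = u2 := Submodule.reflection_sub h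
  have hmeas : Measurable Q := Q.continuous.measurable
  have hpre : Q ⁻¹' Metric.closedBall u2 r = Metric.closedBall u1 r := by
    ext v
    simp only [Set.mem_preimage, Metric.mem_closedBall]
    rw [← hQ, Q.dist_map]
  calc lam (Metric.closedBall u1 r) = lam (Q ⁻¹' Metric.closedBall u2 r) := by rw [hpre]
    _ = lam.map Q (Metric.closedBall u2 r) :=
        (Measure.map_apply hmeas Metric.isClosed_closedBall.measurableSet).symm
    _ = lam (Metric.closedBall u2 r) := by rw [hinv Q]

lemma cap_bound (lam : Measure (EuclideanSpace ℝ (Fin (k+1))))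
    (hprob : IsProbabilityMeasure lam)
    (hinv : ∀ Q : EuclideanSpace ℝ (Fin (k+1)) ≃ₗᵢ[ℝ] EuclideanSpace ℝ (Fin (k+1)), lam.map Q = lam)
    (u : EuclideanSpace ℝ (Fin (k+1))) (hu : ‖u‖ = 1) (r : ℝ) (hr : 0 < r) :
    lam (Metric.closedBall u r) ≤ ENNReal.ofReal ((6*((k:ℝ)+1)*r)^k) := by
  set D : ℝ := (k:ℝ)+1 with hDdef
  have hD : 1 ≤ D := by rw [hDdef]; have : (0:ℝ) ≤ k := Nat.cast_nonneg k; linarith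
  have hDr : 0 < 6*D*r := by positivity
  set m : ℕ := ⌊1/(6*D*r)⌋₊ + 1 with hmdef
  have hm1 : (1:ℝ)/(6*D*r) ≤ m := by
    push_cast [hmdef]
    exact (Nat.lt_floor_add_one _).le
  have hm0 : 0 < (m:ℝ) := lt_of_lt_of_le (by positivity) hm1
  have hm2 : 3*r*((m:ℝ)-1) ≤ 1/(2*D) := by
    have h1 : ((m:ℝ)-1) = (⌊1/(6*D*r)⌋₊ : ℝ) := by push_cast [hmdef]; ring
    rw [h1]
    have h2 : (⌊1/(6*D*r)⌋₊ : ℝ) ≤ 1/(6*D*r) := Nat.floor_le (by positivity)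
    calc 3*r*(⌊1/(6*D*r)⌋₊ : ℝ) ≤ 3*r*(1/(6*D*r)) := by
          apply mul_le_mul_of_nonneg_left h2 (by positivity)
      _ = 1/(2*D) := by field_simp; ring
  -- grid points
  set y : (Fin k → Fin m) → Fin k → ℝ := fun c j => 3*r*(c j) with hydef
  have hyb : ∀ c (j : Fin k), 0 ≤ y c j ∧ y c j ≤ 1/(2*D) := by
    intro c j
    constructor
    · positivity
    · calc y c j = 3*r*(c j : ℝ) := rfl
        _ ≤ 3*r*((m:ℝ)-1) := by
            apply mul_le_mul_of_nonneg_left _ (by positivity)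
            have : (c j : ℕ) ≤ m - 1 := Nat.le_sub_one_of_lt (c j).isLt
            have h3 : ((c j : ℕ) : ℝ) ≤ ((m - 1 : ℕ) : ℝ) := by exact_mod_cast this
            calc ((c j : ℕ) : ℝ) ≤ ((m-1 : ℕ) : ℝ) := h3
              _ = (m:ℝ)-1 := by
                  have : 1 ≤ m := by omega
                  push_cast [this]; ring
        _ ≤ 1/(2*D) := hm2
  have hsum : ∀ c, ∑ j, (y c j)^2 ≤ 1 := by
    intro c
    calc ∑ j, (y c j)^2 ≤ ∑ _j : Fin k, (1/(2*D))^2 := by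
          apply Finset.sum_le_sum
          intro j _
          have := hyb c j
          nlinarith [this.1, this.2]
      _ = k * (1/(2*D))^2 := by simp [Finset.sum_const]
      _ ≤ 1 := by
          have hkD : (k:ℝ) ≤ D := by rw [hDdef]; linarith
          rw [div_pow, one_pow, mul_one_div, div_le_one (by positivity)]
          nlinarith
  set P : (Fin k → Fin m) → EuclideanSpace ℝ (Fin (k+1)) := fun c => vpt (y c) with hPdef
  have hPnorm : ∀ c, ‖P c‖ = 1 := fun c => vpt_norm _ (hsum c)
  have hsep : ∀ c c', c ≠ c' → 3*r ≤ dist (P c) (P c') := by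
    intro c c' hne
    obtain ⟨j, hj⟩ : ∃ j, c j ≠ c' j := by
      by_contra h
      push_neg at h
      exact hne (funext h)
    have h1 : (1:ℝ) ≤ |((c j : ℕ) : ℝ) - ((c' j : ℕ) : ℝ)| := by
      have hz : ((c j : ℕ) : ℤ) - ((c' j : ℕ) : ℤ) ≠ 0 := by
        intro h
        apply hj
        have : (c j : ℕ) = (c' j : ℕ) := by omega
        exact Fin.ext this
      have := Int.one_le_abs hz
      push_cast at this ⊢
      exact_mod_cast this
    have h2 : 3*r ≤ |y c j - y c' j| := by
      have : y c j - y c' j = 3*r*(((c j : ℕ) : ℝ) - ((c' j : ℕ) : ℝ)) := by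
        simp [hydef]; ring
      rw [this, abs_mul, abs_of_pos (by positivity : (0:ℝ) < 3*r)]
      nlinarith
    have h3 : |y c j - y c' j| ≤ dist (P c) (P c') := by
      rw [dist_eq_norm]
      have h4 : (P c - P c') (Fin.castSucc j) = y c j - y c' j := by
        have : (P c - P c') (Fin.castSucc j) = P c (Fin.castSucc j) - P c' (Fin.castSucc j) := rfl
        rw [this, hPdef]
        simp [vpt_castSucc]
      rw [← h4]
      exact abs_coord_le _ _
    linarith
  have hdisj : Set.PairwiseDisjoint (Finset.univ : Finset (Fin k → Fin m)) 
      (fun c => Metric.closedBall (P c) r) := by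
    intro c _ c' _ hne
    apply Set.disjoint_left.mpr
    intro z hz hz'
    simp only [Metric.mem_closedBall] at hz hz'
    have := hsep c c' hne
    have htri := dist_triangle (P c) z (P c')
    rw [dist_comm (P c) z] at htri
    linarith
  have hkey : ∀ c, lam (Metric.closedBall (P c) r) = lam (Metric.closedBall u r) :=
    fun c => cap_measure_eq lam hinv (P c) u (by rw [hPnorm c, hu]) r
  have hsum2 : ((Finset.univ : Finset (Fin k → Fin m)).card : ℝ≥0∞) * lam (Metric.closedBall u r) ≤ 1 := by
    calc ((Finset.univ : Finset (Fin k → Fin m)).card : ℝ≥0∞) * lam (Metric.closedBall u r)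
        = ∑ c : Fin k → Fin m, lam (Metric.closedBall (P c) r) := by
          rw [Finset.sum_congr rfl (fun c _ => hkey c)]
          simp [Finset.sum_const, mul_comm]
      _ = lam (⋃ c ∈ (Finset.univ : Finset (Fin k → Fin m)), Metric.closedBall (P c) r) := 
          (measure_biUnion_finset hdisj (fun c _ => Metric.isClosed_closedBall.measurableSet)).symm
      _ ≤ lam Set.univ := measure_mono (Set.subset_univ _)
      _ = 1 := measure_univ
  have hcard : ((Finset.univ : Finset (Fin k → Fin m)).card) = m^k := by
    simp [Finset.card_univ]
  rw [hcard] at hsum2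
  have hmne : ((m:ℝ≥0∞))^k ≠ 0 := by positivity
  have hle : lam (Metric.closedBall u r) ≤ (((m:ℝ≥0∞))^k)⁻¹ := by
    rw [ENNReal.le_inv_iff_mul_le]
    calc lam (Metric.closedBall u r) * (m:ℝ≥0∞)^k 
        = (m:ℝ≥0∞)^k * lam (Metric.closedBall u r) := mul_comm _ _
      _ = ((m^k : ℕ) : ℝ≥0∞) * lam (Metric.closedBall u r) := by push_cast; ring_nf
      _ ≤ 1 := hsum2
  refine hle.trans ?_
  have hcast : ((m:ℝ≥0∞))^k = ENNReal.ofReal ((m:ℝ)^k) := by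
    rw [ENNReal.ofReal_pow (by positivity)]
    congr 1
    exact (ENNReal.ofReal_natCast m).symm
  rw [hcast, ← ENNReal.ofReal_inv_of_pos (by positivity)]
  apply ENNReal.ofReal_le_ofReal
  rw [inv_le_comm₀ (by positivity) (by positivity)]
  rw [← inv_pow]
  apply pow_le_pow_left₀ (by positivity)
  rw [inv_eq_one_div]
  exact hm1

/-- Points of the lattice `ℤ^d`. -/
abbrev Zd (d : ℕ) := Fin d → ℤ

/-- The `ℓ^∞` norm of a lattice point. -/
def norminf {d : ℕ} (x : Zd d) : ℕ := Finset.univ.sup fun j => (x j).natAbs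

set_option maxHeartbeats 1000000 in
/-- For `d ≥ 3` and `ε ∈ (0,1)` there is `C = C(d,ε) < ∞` such that for every lattice point
`x ≠ 0`, the normalized rotation-invariant (Haar) measure of the set of directions
`{v ∈ S^{d-1} : x ∈ ⋃_{n≥1} B(nv, n^ε)}` (balls in the `ℓ^∞` distance) is at most
`C |x|^{(ε-1)(d-1)}`. -/
theorem measure_directions_through_point (d : ℕ) (hd : 3 ≤ d)
    (ε : ℝ) (hε : ε ∈ Set.Ioo (0:ℝ) 1) :
    ∃ C : ℝ, 0 < C ∧
    ∀ x : Zd d, 1 ≤ norminf x →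
    ∀ lam : Measure (EuclideanSpace ℝ (Fin d)), IsProbabilityMeasure lam →
    lam {v | ‖v‖ ≠ 1} = 0 →
    (∀ Q : EuclideanSpace ℝ (Fin d) ≃ₗᵢ[ℝ] EuclideanSpace ℝ (Fin d), lam.map Q = lam) →
    lam {v | ∃ n : ℕ, 1 ≤ n ∧ ∀ j, |(x j : ℝ) - (n : ℝ) * v j| ≤ (n : ℝ) ^ ε}
      ≤ ENNReal.ofReal (C * (norminf x : ℝ) ^ ((ε - 1) * ((d : ℝ) - 1))) := by
  obtain ⟨hε0, hε1⟩ := hε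
  obtain ⟨k, rfl⟩ : ∃ k, d = k + 1 := ⟨d - 1, by omega⟩
  have hcastk : ((k+1 : ℕ) : ℝ) - 1 = (k : ℝ) := by push_cast; ring
  set D : ℝ := (k:ℝ) + 1 with hDdef
  clear_value D
  have hD1 : 1 ≤ D := by have : (0:ℝ) ≤ k := Nat.cast_nonneg k; simp only [hDdef]; linarith
  have hε1' : (0:ℝ) < 1 - ε := by linarith
  set M : ℝ := (2*D) ^ ((1:ℝ)/(1-ε)) with hMdef
  clear_value M
  have hM1 : 1 ≤ M := by rw [hMdef]; exact Real.one_le_rpow (by linarith) (by positivity)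
  set R₀ : ℝ := 3*D*M with hR0def
  clear_value R₀
  have hR₀1 : 1 ≤ R₀ := by nlinarith
  set C : ℝ := (18*D^2)^k + R₀ ^ ((1-ε)*(k:ℝ)) + 1 with hCdef
  clear_value C
  have hC18 : (18*D^2)^k ≤ C := by
    have h1 : 0 ≤ R₀ ^ ((1-ε)*(k:ℝ)) := Real.rpow_nonneg (by linarith) _
    simp only [hCdef]; linarith
  have hCpos : 0 < C := by
    have h2 : (0:ℝ) ≤ (18*D^2)^k := by positivity
    rw [hCdef]
    have h1 : 0 ≤ R₀ ^ ((1-ε)*(k:ℝ)) := Real.rpow_nonneg (by linarith) _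
    linarith
  refine ⟨C, hCpos, ?_⟩
  intro x hx lam hprob hsphere hinv
  set R : ℝ := (norminf x : ℝ) with hRdef
  clear_value R
  have hR1 : 1 ≤ R := by simp only [hRdef]; exact_mod_cast hx
  rw [hcastk]
  set xv : EuclideanSpace ℝ (Fin (k+1)) := WithLp.toLp 2 (fun j => (x j : ℝ)) with hxvdef
  clear_value xv
  have hxcoord : ∀ j, |xv j| ≤ R := by
    intro j
    have h1 : (x j).natAbs ≤ norminf x := by
      unfold norminf; exact Finset.le_sup (f := fun j => (x j).natAbs) (Finset.mem_univ j)
    have h2 : |xv j| = ((x j).natAbs : ℝ) := by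
      simp [hxvdef, Nat.cast_natAbs, abs_abs]
    rw [h2, hRdef]
    exact Nat.cast_le.mpr h1
  have hxnorm_lb : R ≤ ‖xv‖ := by
    obtain ⟨j0, _, hj0⟩ := Finset.exists_mem_eq_sup (Finset.univ : Finset (Fin (k+1)))
      (Finset.univ_nonempty) (fun j => (x j).natAbs)
    have h2 : |xv j0| = ((x j0).natAbs : ℝ) := by
      simp [hxvdef, Nat.cast_natAbs, abs_abs]
    have h3 : R = |xv j0| := by rw [h2, hRdef, norminf, hj0]
    rw [h3]; exact abs_coord_le xv j0
  have hxpos : 0 < ‖xv‖ := lt_of_lt_of_le (by linarith) hxnorm_lb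
  have hxnorm_ub : ‖xv‖ ≤ D * R := by
    have := norm_le_of_coords xv R (by linarith) hxcoord
    calc ‖xv‖ ≤ ((k+1:ℕ):ℝ) * R := this
      _ = D * R := by rw [hDdef]; push_cast; ring
  -- exponent facts
  have hRpos : (0:ℝ) < R := by linarith
  by_cases hcase : R ≤ R₀
  · -- small R : trivial bound
    have hone : (1:ℝ) ≤ C * R ^ ((ε-1)*(k:ℝ)) := by
      have h1 : R ^ ((1-ε)*(k:ℝ)) ≤ R₀ ^ ((1-ε)*(k:ℝ)) :=
        Real.rpow_le_rpow (by linarith) hcase (by positivity)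
      have h2 : R ^ ((1-ε)*(k:ℝ)) * R ^ ((ε-1)*(k:ℝ)) = 1 := by
        rw [← Real.rpow_add hRpos]
        have : (1-ε)*(k:ℝ) + (ε-1)*(k:ℝ) = 0 := by ring
        rw [this, Real.rpow_zero]
      have h3 : 0 ≤ R ^ ((ε-1)*(k:ℝ)) := Real.rpow_nonneg (by linarith) _
      have h4 : R₀ ^ ((1-ε)*(k:ℝ)) ≤ C := by
        have h5 : (0:ℝ) ≤ (18*D^2)^k := by positivity
        simp only [hCdef]; linarith
      nlinarith
    calc lam {v | ∃ n : ℕ, 1 ≤ n ∧ ∀ j, |(x j : ℝ) - (n : ℝ) * v j| ≤ (n : ℝ) ^ ε}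
        ≤ 1 := prob_le_one
      _ ≤ ENNReal.ofReal (C * R ^ ((ε-1)*(k:ℝ))) := ENNReal.one_le_ofReal.mpr hone
  · -- large R
    push_neg at hcase
    set r : ℝ := 3*D*R^(ε-1) with hrdef
    clear_value r
    have hrpos : 0 < r := by
      rw [hrdef]
      exact mul_pos (by linarith) (Real.rpow_pos_of_pos hRpos _)
    set u : EuclideanSpace ℝ (Fin (k+1)) := ‖xv‖⁻¹ • xv with hudef
    clear_value u
    have hu : ‖u‖ = 1 := by
      rw [hudef, norm_smul, Real.norm_eq_abs, abs_of_pos (by positivity)]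
      field_simp
    have hsub : {v : EuclideanSpace ℝ (Fin (k+1)) |
        ∃ n : ℕ, 1 ≤ n ∧ ∀ j, |(x j : ℝ) - (n : ℝ) * v j| ≤ (n : ℝ) ^ ε}
        ⊆ Metric.closedBall u r ∪ {v | ‖v‖ ≠ 1} := by
      intro v hv
      by_cases hvn : ‖v‖ = 1
      swap
      · right; exact hvn
      left
      obtain ⟨n, hn1, hball⟩ := hv
      have hnpos : (0:ℝ) < n := by exact_mod_cast hn1
      have hn1' : (1:ℝ) ≤ n := by exact_mod_cast hn1
      have hnε : (0:ℝ) < (n:ℝ)^ε := Real.rpow_pos_of_pos hnpos _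
      have hdist : ‖xv - (n:ℝ) • v‖ ≤ D * (n:ℝ)^ε := by
        have h1 : ∀ j, |(xv - (n:ℝ) • v) j| ≤ (n:ℝ)^ε := by
          intro j
          have heq : (xv - (n:ℝ) • v) j = (x j : ℝ) - (n:ℝ) * v j := by
            simp [hxvdef, PiLp.sub_apply, PiLp.smul_apply, smul_eq_mul]
          rw [heq]; exact hball j
        calc ‖xv - (n:ℝ) • v‖ ≤ ((k+1:ℕ):ℝ) * (n:ℝ)^ε := norm_le_of_coords _ _ (le_of_lt hnε) h1
          _ = D * (n:ℝ)^ε := by rw [hDdef]; push_cast; ring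
      have hnv : ‖(n:ℝ) • v‖ = (n:ℝ) := by
        rw [norm_smul, hvn, Real.norm_eq_abs, abs_of_pos hnpos, mul_one]
      have hnx_ub : ‖xv‖ ≤ (n:ℝ) + D * (n:ℝ)^ε := by
        have htri1 := norm_add_le (xv - (n:ℝ)•v) ((n:ℝ)•v)
        rw [sub_add_cancel] at htri1
        rw [hnv] at htri1
        linarith
      have hnx_lb : (n:ℝ) - D * (n:ℝ)^ε ≤ ‖xv‖ := by
        have htri2 := norm_add_le ((n:ℝ)•v - xv) xv
        rw [sub_add_cancel, hnv, norm_sub_rev] at htri2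
        linarith
      -- n is at least M
      have hnM : M ≤ (n:ℝ) := by
        by_contra hcon
        push_neg at hcon
        have h1 : (n:ℝ)^ε ≤ (n:ℝ) := by
          calc (n:ℝ)^ε ≤ (n:ℝ)^(1:ℝ) :=
                Real.rpow_le_rpow_of_exponent_le hn1' (by linarith)
            _ = (n:ℝ) := Real.rpow_one _
        have h2a : D*(n:ℝ)^ε ≤ D*(n:ℝ) := mul_le_mul_of_nonneg_left h1 (by linarith)
        have h2 : ‖xv‖ ≤ (n:ℝ) + D * (n:ℝ) := by linarith
        have h3a : D*(n:ℝ) ≤ D*M := mul_le_mul_of_nonneg_left hcon.le (by linarith)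
        have h3b : M ≤ D*M := le_mul_of_one_le_left (by linarith) hD1
        have h3 : ‖xv‖ ≤ 2*(D*M) := by linarith
        have h4 : R₀ < ‖xv‖ := lt_of_lt_of_le hcase hxnorm_lb
        rw [hR0def] at h4
        have h5 : (0:ℝ) ≤ D*M := by positivity
        linarith
      -- D n^ε ≤ n/2
      have hDn : D * (n:ℝ)^ε ≤ (n:ℝ)/2 := by
        have h1 : M^(1-ε) = 2*D := by
          rw [hMdef, ← Real.rpow_mul (by linarith)]
          rw [one_div, inv_mul_cancel₀ (ne_of_gt hε1'), Real.rpow_one]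
        have h2 : (2*D) ≤ (n:ℝ)^(1-ε) := by
          rw [← h1]
          exact Real.rpow_le_rpow (by linarith) hnM (by linarith)
        have h3 : (n:ℝ)^ε * (n:ℝ)^(1-ε) = (n:ℝ) := by
          rw [← Real.rpow_add hnpos]
          norm_num
        have h4 : 2*(D*(n:ℝ)^ε) ≤ (n:ℝ) := by
          calc 2*(D*(n:ℝ)^ε) = (n:ℝ)^ε * (2*D) := by ring
            _ ≤ (n:ℝ)^ε * (n:ℝ)^(1-ε) := mul_le_mul_of_nonneg_left h2 (le_of_lt hnε)
            _ = (n:ℝ) := h3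
        linarith
      have hn_half : (n:ℝ)/2 ≤ ‖xv‖ := by linarith
      have hn_lb : 2*R/3 ≤ (n:ℝ) := by
        have : ‖xv‖ ≤ (n:ℝ) + (n:ℝ)/2 := by linarith
        linarith [hxnorm_lb]
      -- distance estimate
      have hdecomp : v - u = (n:ℝ)⁻¹ • ((n:ℝ)•v - xv) + ((n:ℝ)⁻¹ - ‖xv‖⁻¹) • xv := by
        rw [smul_sub, smul_smul, inv_mul_cancel₀ (ne_of_gt hnpos), one_smul, sub_smul, hudef]
        abel
      have habs : |‖xv‖ - (n:ℝ)| ≤ D * (n:ℝ)^ε := abs_le.mpr ⟨by linarith, by linarith⟩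
      have hterm2 : |(n:ℝ)⁻¹ - ‖xv‖⁻¹| * ‖xv‖ = |‖xv‖ - (n:ℝ)| / (n:ℝ) := by
        rw [show (n:ℝ)⁻¹ - ‖xv‖⁻¹ = (‖xv‖ - (n:ℝ))/((n:ℝ) * ‖xv‖) by
          field_simp]
        rw [abs_div, abs_mul, abs_of_pos hnpos, abs_of_pos hxpos]
        field_simp
      have hnormvu : ‖v - u‖ ≤ 2*D*(n:ℝ)^ε/(n:ℝ) := by
        rw [hdecomp]
        calc ‖(n:ℝ)⁻¹ • ((n:ℝ)•v - xv) + ((n:ℝ)⁻¹ - ‖xv‖⁻¹) • xv‖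
            ≤ ‖(n:ℝ)⁻¹ • ((n:ℝ)•v - xv)‖ + ‖((n:ℝ)⁻¹ - ‖xv‖⁻¹) • xv‖ := norm_add_le _ _
          _ = (n:ℝ)⁻¹ * ‖(n:ℝ)•v - xv‖ + |(n:ℝ)⁻¹ - ‖xv‖⁻¹| * ‖xv‖ := by
              rw [norm_smul, norm_smul, Real.norm_eq_abs, Real.norm_eq_abs,
                abs_of_pos (by positivity)]
          _ ≤ (n:ℝ)⁻¹ * (D * (n:ℝ)^ε) + (D * (n:ℝ)^ε) / (n:ℝ) := by
              have h5 : ‖(n:ℝ)•v - xv‖ ≤ D * (n:ℝ)^ε := by rw [norm_sub_rev]; exact hdist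
              have h6 : |(n:ℝ)⁻¹ - ‖xv‖⁻¹| * ‖xv‖ ≤ (D * (n:ℝ)^ε) / (n:ℝ) := by
                rw [hterm2]
                gcongr
              have h7 : (n:ℝ)⁻¹ * ‖(n:ℝ)•v - xv‖ ≤ (n:ℝ)⁻¹ * (D * (n:ℝ)^ε) :=
                mul_le_mul_of_nonneg_left h5 (by positivity)
              linarith
          _ = 2*D*(n:ℝ)^ε/(n:ℝ) := by field_simp; ring
      have hfin : 2*D*(n:ℝ)^ε/(n:ℝ) ≤ r := by
        have h7 : (n:ℝ)^(ε-1) = (n:ℝ)^ε / (n:ℝ) := by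
          rw [Real.rpow_sub hnpos, Real.rpow_one]
        have h8 : (n:ℝ)^(ε-1) ≤ (2*R/3)^(ε-1) :=
          Real.rpow_le_rpow_of_nonpos (by linarith) hn_lb (by linarith)
        have h9 : (2*R/3)^(ε-1) = (2/3:ℝ)^(ε-1) * R^(ε-1) := by
          rw [show 2*R/3 = (2/3:ℝ) * R by ring, Real.mul_rpow (by norm_num) (by linarith)]
        have h10 : (2/3:ℝ)^(ε-1) ≤ 3/2 := by
          calc (2/3:ℝ)^(ε-1) ≤ (2/3:ℝ)^(-1:ℝ) :=
                Real.rpow_le_rpow_of_exponent_ge (by norm_num) (by norm_num) (by linarith)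
            _ = 3/2 := by rw [Real.rpow_neg_one]; norm_num
        have hRp : (0:ℝ) ≤ R^(ε-1) := Real.rpow_nonneg (by linarith) _
        have hA : (n:ℝ)^(ε-1) ≤ (3/2) * R^(ε-1) := by
          calc (n:ℝ)^(ε-1) ≤ (2*R/3)^(ε-1) := h8
            _ = (2/3:ℝ)^(ε-1) * R^(ε-1) := h9
            _ ≤ (3/2) * R^(ε-1) := mul_le_mul_of_nonneg_right h10 hRp
        calc 2*D*(n:ℝ)^ε/(n:ℝ) = 2*D*((n:ℝ)^(ε-1)) := by rw [h7]; ring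
          _ ≤ 2*D*((3/2) * R^(ε-1)) := mul_le_mul_of_nonneg_left hA (by linarith)
          _ = r := by rw [hrdef]; ring
      exact Metric.mem_closedBall.mpr (by rw [dist_eq_norm]; linarith)
    -- combine
    calc lam {v | ∃ n : ℕ, 1 ≤ n ∧ ∀ j, |(x j : ℝ) - (n : ℝ) * v j| ≤ (n : ℝ) ^ ε}
        ≤ lam (Metric.closedBall u r ∪ {v | ‖v‖ ≠ 1}) := measure_mono hsub
      _ ≤ lam (Metric.closedBall u r) + lam {v | ‖v‖ ≠ 1} := measure_union_le _ _
      _ = lam (Metric.closedBall u r) := by rw [hsphere, add_zero]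
      _ ≤ ENNReal.ofReal ((6*((k:ℝ)+1)*r)^k) := cap_bound lam hprob hinv u hu r hrpos
      _ ≤ ENNReal.ofReal (C * R ^ ((ε-1)*(k:ℝ))) := by
          apply ENNReal.ofReal_le_ofReal
          have h12 : 6*((k:ℝ)+1)*r = 18*D^2 * R^(ε-1) := by
            rw [hrdef, hDdef]; ring
          rw [h12]
          have h13 : (18*D^2 * R^(ε-1))^k = (18*D^2)^k * R^((ε-1)*(k:ℝ)) := by
            rw [mul_pow]
            congr 1
            rw [Real.rpow_mul (by linarith), Real.rpow_natCast]
          rw [h13]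
          apply mul_le_mul_of_nonneg_right hC18 (Real.rpow_nonneg (by linarith) _)
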